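/- In Euclidean space, let a, x, w be points with a ≠ x and w ≠ x. Then (‖a−x‖ − ‖a−w‖)/‖x−w‖ ≤ cos θ, where θ is the angle at x between the vectors a−x and w−x. -/
import Mathlib

open scoped RealInnerProductSpace

theorem stmt_1 {E : Type*} [NormedAddCommGroup E] [InnerProductSpace ℝ E]
    (a x w : E) (hax : a ≠ x) (hwx : w ≠ x) :
    (‖a - x‖ - ‖a - w‖) / ‖x - w‖ ≤ ⟪a - x, w - x⟫ / (‖a - x‖ * ‖w - x‖) := by
  have hu : 0 < ‖a - x‖ := norm_pos_iff.2 (sub_ne_zero.2 hax)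
  have hv : 0 < ‖w - x‖ := norm_pos_iff.2 (sub_ne_zero.2 hwx)
  have hxw : ‖x - w‖ = ‖w - x‖ := norm_sub_rev x w
  have hpoly : ‖(a - x) - (w - x)‖ ^ 2 = ‖a - x‖ ^ 2 - 2 * ⟪a - x, w - x⟫ + ‖w - x‖ ^ 2 :=
    norm_sub_sq_real _ _
  rw [show (a - x) - (w - x) = a - w by abel] at hpoly
  have htri : |‖a - x‖ - ‖a - w‖| ≤ ‖w - x‖ := by
    have := abs_norm_sub_norm_le (a - x) (a - w)
    rwa [show (a - x) - (a - w) = w - x by abel] at this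
  have habs := abs_le.1 htri
  rw [hxw, div_le_div_iff₀ hv (by positivity)]
  nlinarith [sq_nonneg (‖a - x‖ - ‖a - w‖), norm_nonneg (a - w),
    mul_nonneg hv.le (sub_nonneg.2 (mul_self_le_mul_self (abs_nonneg _) htri)),
    sq_abs (‖a - x‖ - ‖a - w‖)]
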